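/- For n = 3, k = 2, the point κ = (−1/2, 1, 3/2) lies in the Gårding cone Γ₂ (i.e., σ₁(κ) > 0 and σ₂(κ) > 0), but for f = H₂^{1/2} one has f(κ) − (∂f/∂κ₃)(κ)·κ₃ < 0. -/

import Mathlib

open Real

/-- The k-th elementary symmetric polynomial of `κ : Fin n → ℝ`. -/
noncomputable def esymm (n k : ℕ) (κ : Fin n → ℝ) : ℝ :=
  ∑ s ∈ Finset.powersetCard k (Finset.univ : Finset (Fin n)), ∏ i ∈ s, κ i

/-- The normalized k-th mean curvature `H_k = σ_k / C(n,k)`. -/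
noncomputable def Hmean (n k : ℕ) (κ : Fin n → ℝ) : ℝ := esymm n k κ / (n.choose k)

lemma esymm32 (x : Fin 3 → ℝ) : esymm 3 2 x = x 0 * x 1 + x 0 * x 2 + x 1 * x 2 := by
  have h : (Finset.powersetCard 2 (Finset.univ : Finset (Fin 3))) = {{0,1},{0,2},{1,2}} := by decide
  rw [esymm, h]
  rw [show ({{0,1},{0,2},{1,2}} : Finset (Finset (Fin 3))) = insert {0,1} (insert {0,2} {{1,2}}) from rfl]
  rw [Finset.sum_insert (by decide), Finset.sum_insert (by decide), Finset.sum_singleton]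
  rw [show ({0,1} : Finset (Fin 3)) = insert 0 {1} from rfl, Finset.prod_insert (by decide), Finset.prod_singleton]
  rw [show ({0,2} : Finset (Fin 3)) = insert 0 {2} from rfl, Finset.prod_insert (by decide), Finset.prod_singleton]
  rw [show ({1,2} : Finset (Fin 3)) = insert 1 {2} from rfl, Finset.prod_insert (by decide), Finset.prod_singleton]
  ring

lemma esymm31 (x : Fin 3 → ℝ) : esymm 3 1 x = x 0 + x 1 + x 2 := by
  have h : (Finset.powersetCard 1 (Finset.univ : Finset (Fin 3))) = {{0},{1},{2}} := by decide
  rw [esymm, h]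
  rw [show ({{0},{1},{2}} : Finset (Finset (Fin 3))) = insert {0} (insert {1} {{2}}) from rfl]
  rw [Finset.sum_insert (by decide), Finset.sum_insert (by decide), Finset.sum_singleton,
    Finset.prod_singleton, Finset.prod_singleton, Finset.prod_singleton]
  ring

noncomputable abbrev pj (i : Fin 3) : (Fin 3 → ℝ) →L[ℝ] ℝ := ContinuousLinearMap.proj i

lemma hg (κ : Fin 3 → ℝ) :
    HasFDerivAt (fun x : Fin 3 → ℝ => (3:ℝ)⁻¹ • (x 0 * x 1 + x 0 * x 2 + x 1 * x 2))
      ((3:ℝ)⁻¹ • ((κ 1 + κ 2) • pj 0 + (κ 0 + κ 2) • pj 1 + (κ 0 + κ 1) • pj 2)) κ := by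
  have h0 : HasFDerivAt (fun x : Fin 3 → ℝ => x 0) (pj 0) κ := hasFDerivAt_apply 0 κ
  have h1 : HasFDerivAt (fun x : Fin 3 → ℝ => x 1) (pj 1) κ := hasFDerivAt_apply 1 κ
  have h2 : HasFDerivAt (fun x : Fin 3 → ℝ => x 2) (pj 2) κ := hasFDerivAt_apply 2 κ
  have h := (((h0.mul h1).add (h0.mul h2)).add (h1.mul h2)).const_smul ((3:ℝ)⁻¹)
  refine h.congr_fderiv ?_
  ext v
  simp [div_eq_inv_mul]
  ring

theorem stmt_7 :
    let κ : Fin 3 → ℝ := ![-1/2, 1, 3/2]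
    0 < esymm 3 1 κ ∧ 0 < esymm 3 2 κ ∧
    (Hmean 3 2 κ) ^ ((1 : ℝ) / 2)
        - fderiv ℝ (fun x => (Hmean 3 2 x) ^ ((1 : ℝ) / 2)) κ (Pi.single 2 1) * κ 2 < 0 := by
  intro κ
  have hκ0 : κ 0 = -1/2 := rfl
  have hκ1 : κ 1 = 1 := rfl
  have hκ2 : κ 2 = 3/2 := rfl
  refine ⟨by rw [esymm31, hκ0, hκ1, hκ2]; norm_num, by rw [esymm32, hκ0, hκ1, hκ2]; norm_num, ?_⟩
  -- Hmean 3 2 x = (1/3) • (...)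
  have hfun : (fun x : Fin 3 → ℝ => (Hmean 3 2 x) ^ ((1:ℝ)/2))
      = (fun y : ℝ => y ^ ((1:ℝ)/2)) ∘ (fun x : Fin 3 → ℝ => (3:ℝ)⁻¹ • (x 0 * x 1 + x 0 * x 2 + x 1 * x 2)) := by
    funext x
    simp [Hmean, esymm32, Function.comp, div_eq_inv_mul]
  have hgκ : ((3:ℝ)⁻¹ • (κ 0 * κ 1 + κ 0 * κ 2 + κ 1 * κ 2)) = 1/12 := by
    rw [hκ0, hκ1, hκ2]; norm_num
  -- derivative of rpow at 1/12
  have hr : HasDerivAt (fun y : ℝ => y ^ ((1:ℝ)/2)) ((1/2) * (1/12:ℝ) ^ ((1:ℝ)/2 - 1)) (1/12 : ℝ) :=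
    Real.hasDerivAt_rpow_const (Or.inl (by norm_num))
  have hcomp : HasFDerivAt (fun x : Fin 3 → ℝ => (Hmean 3 2 x) ^ ((1:ℝ)/2))
      (((1/2) * (1/12:ℝ) ^ ((1:ℝ)/2 - 1)) •
        ((3:ℝ)⁻¹ • ((κ 1 + κ 2) • pj 0 + (κ 0 + κ 2) • pj 1 + (κ 0 + κ 1) • pj 2))) κ := by
    rw [hfun]
    rw [← hgκ] at hr
    have := hr.hasFDerivAt.comp κ (hg κ)
    rw [hgκ] at this
    refine this.congr_fderiv ?_
    ext v
    simp [mul_comm]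
    ring
  rw [hcomp.fderiv]
  -- evaluate
  have hev : (((1/2) * (1/12:ℝ) ^ ((1:ℝ)/2 - 1)) •
        ((3:ℝ)⁻¹ • ((κ 1 + κ 2) • pj 0 + (κ 0 + κ 2) • pj 1 + (κ 0 + κ 1) • pj 2)))
        (Pi.single 2 1) = (1/2) * (1/12:ℝ) ^ ((1:ℝ)/2 - 1) * (3:ℝ)⁻¹ * (1/2) := by
    simp [hκ0, hκ1, hκ2, Pi.single_apply]
    ring
  rw [hev]
  have hH : Hmean 3 2 κ = 1/12 := by
    rw [Hmean, esymm32, hκ0, hκ1, hκ2]; norm_num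
  rw [hH]
  -- now pure rpow arithmetic
  have ha : (0:ℝ) < (1/12:ℝ) ^ ((1:ℝ)/2) := rpow_pos_of_pos (by norm_num) _
  have hsub : (1/12:ℝ) ^ ((1:ℝ)/2 - 1) = (1/12:ℝ) ^ ((1:ℝ)/2) / (1/12:ℝ) := by
    rw [rpow_sub (by norm_num), rpow_one]
  rw [hsub]
  have hsq : (1/12:ℝ) ^ ((1:ℝ)/2) * (1/12:ℝ) ^ ((1:ℝ)/2) = 1/12 := by
    rw [← rpow_add (by norm_num)]; norm_num
  nlinarith [ha, hsq]
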